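/- Suppose F : (a,b) → ℝ satisfies: (1) limsup_{y ↗ x} F(y) ≤ F(x) ≤ limsup_{y ↘ x} F(y) for every x ∈ (a,b); and (2) there exist a strictly increasing function φ : (a,b) → ℝ and a real number α > 0 such that for every x ∈ (a,b) except at most countably many, liminf_{h ↘ 0} (F(x+h) − F(x)) / (φ(x + α h) − φ(x)) ≥ 0. Then F is increasing (monotone nondecreasing) on (a,b). -/

import Mathlib

open Filter Set Topology MeasureTheory

noncomputable def psiAux (s : ℕ → ℝ) (t : ℝ) : ℝ :=
  ∑' n, if s n < t then (1/2:ℝ)^n else 0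

lemma psi_summable (s : ℕ → ℝ) (t : ℝ) :
    Summable (fun n => if s n < t then (1/2:ℝ)^n else 0) := by
  apply Summable.of_nonneg_of_le (fun n => ?_) (fun n => ?_) summable_geometric_two
  · split <;> positivity
  · split
    · exact le_rfl
    · positivity

lemma psi_nonneg (s : ℕ → ℝ) (t : ℝ) : 0 ≤ psiAux s t :=
  tsum_nonneg (fun n => by split <;> positivity)

lemma psi_le_two (s : ℕ → ℝ) (t : ℝ) : psiAux s t ≤ 2 := by
  calc psiAux s t ≤ ∑' n : ℕ, (1/2:ℝ)^n := by
        apply Summable.tsum_le_tsum (fun n => ?_) (psi_summable s t) summable_geometric_two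
        by_cases h : s n < t
        · simp [h]
        · simp [h]
    _ = 2 := tsum_geometric_two

lemma psi_mono (s : ℕ → ℝ) {u v : ℝ} (huv : u ≤ v) : psiAux s u ≤ psiAux s v := by
  apply Summable.tsum_le_tsum (fun n => ?_) (psi_summable s u) (psi_summable s v)
  split_ifs with h1 h2
  · exact le_rfl
  · exact absurd (lt_of_lt_of_le h1 huv) h2
  · positivity
  · exact le_rfl

lemma psi_jump (s : ℕ → ℝ) (n : ℕ) {z : ℝ} (hz : s n < z) :
    psiAux s (s n) + (1/2:ℝ)^n ≤ psiAux s z := by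
  have h1 : HasSum (fun m => if m = n then (1/2:ℝ)^n else 0) ((1/2:ℝ)^n) :=
    hasSum_ite_eq n _
  have key : psiAux s (s n) + (1/2:ℝ)^n
      = ∑' m, ((if s m < s n then (1/2:ℝ)^m else 0) + (if m = n then (1/2:ℝ)^n else 0)) := by
    rw [Summable.tsum_add (psi_summable s (s n)) h1.summable, h1.tsum_eq]; rfl
  rw [key]
  apply Summable.tsum_le_tsum (fun m => ?_) ((psi_summable s (s n)).add h1.summable) (psi_summable s z)
  by_cases hm : m = n
  · subst hm; simp [lt_irrefl, hz]
  · simp only [if_neg hm, add_zero]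
    split_ifs with ha hb
    · exact le_rfl
    · exact absurd (ha.trans hz) hb
    · positivity
    · exact le_rfl

lemma ratio_aux (g : ℝ → ℝ) (α δ T : ℝ) (hα : 0 < α) (hδ : 0 < δ) (hδT : δ ≤ T)
    (hαδT : α * δ ≤ T)
    (gmono : ∀ u v : ℝ, 0 ≤ u → u ≤ v → v ≤ T → g u ≤ g v) (g0 : g 0 = 0) :
    ∃ h : ℝ, 0 < h ∧ h < δ ∧ g (α * h) ≤ (2*α+1) * (g h + h) := by
  have hg_nonneg : ∀ t : ℝ, 0 ≤ t → t ≤ T → 0 ≤ g t := fun t ht hT' => by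
    have := gmono 0 t le_rfl ht hT'; linarith [g0 ▸ this]
  by_cases hα1 : α ≤ 1
  · refine ⟨δ/2, by positivity, by linarith, ?_⟩
    have h1 : g (α * (δ/2)) ≤ g (δ/2) := by
      apply gmono _ _ (by positivity) (by nlinarith) (by linarith)
    have h2 : 0 ≤ g (δ/2) := hg_nonneg _ (by positivity) (by linarith)
    nlinarith
  · push_neg at hα1
    by_contra hcon
    push_neg at hcon
    set K : ℝ := 2*α+1 with hKdef
    have hK0 : (0:ℝ) < K := by positivity
    have hKα : α < K := by nlinarith
    have hKα1 : 1 < K / α := (one_lt_div hα).mpr hKα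
    set u : ℕ → ℝ := fun n => (δ/2) / α^n with hudef
    have hu_pos : ∀ n, 0 < u n := fun n => by positivity
    have hu_le : ∀ n, u n ≤ δ/2 := fun n => by
      apply div_le_self (by positivity)
      exact one_le_pow₀ hα1.le
    have hu_lt : ∀ n, u n < δ := fun n => lt_of_le_of_lt (hu_le n) (by linarith)
    have hu_succ : ∀ n, α * u (n+1) = u n := fun n => by
      simp only [hudef]; field_simp [pow_succ]; ring
    have hgu_nonneg : ∀ n, 0 ≤ g (u n) := fun n =>
      hg_nonneg _ (hu_pos n).le (le_trans (hu_lt n).le hδT)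
    have hstep : ∀ n, K * (g (u (n+1)) + u (n+1)) < g (u n) := fun n => by
      have := hcon (u (n+1)) (hu_pos (n+1)) (hu_lt (n+1))
      rwa [hu_succ n] at this
    have hbound : ∀ n, g (u n) * K^n ≤ g (δ/2) := by
      intro n
      induction n with
      | zero => simp [hudef]
      | succ n ih =>
        have h1 := hstep n
        have h2 : (0:ℝ) < K^n := pow_pos hK0 n
        have h3 := hu_pos (n+1)
        have h4 := hgu_nonneg (n+1)
        have h5 : K * g (u (n+1)) ≤ g (u n) := by nlinarith
        calc g (u (n+1)) * K^(n+1) = (K * g (u (n+1))) * K^n := by ring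
          _ ≤ g (u n) * K^n := mul_le_mul_of_nonneg_right h5 h2.le
          _ ≤ g (δ/2) := ih
    have hlow : ∀ n, K * u (n+1) < g (u n) := fun n => by
      have h1 := hstep n
      have h4 := hgu_nonneg (n+1)
      nlinarith
    obtain ⟨m, hm⟩ := pow_unbounded_of_one_lt (g (δ/2) / (δ/2)) hKα1
    have hcomb : (K/α)^(m+1) * (δ/2) < g (δ/2) := by
      have h1 := hlow m
      have h2 := hbound m
      have h3 : (0:ℝ) < K^m := pow_pos hK0 m
      have heq : (K/α)^(m+1) * (δ/2) = (K * u (m+1)) * K^m := by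
        rw [div_pow]
        simp only [hudef]
        field_simp [pow_succ]
        ring
      rw [heq]
      exact lt_of_lt_of_le (mul_lt_mul_of_pos_right h1 h3) h2
    have hfin : (K/α)^(m+1) < g (δ/2) / (δ/2) := by
      rw [lt_div_iff₀ (by positivity : (0:ℝ) < δ/2)]
      exact hcomb
    have : (K/α)^m ≤ (K/α)^(m+1) := pow_le_pow_right₀ hKα1.le (Nat.le_succ m)
    linarith

/-- Monotonicity criterion: if `F` satisfies the one-sided upper limit conditions and
has positive lower `φ,α`-controlled derivates outside a countable set, it is increasing. -/
theorem stmt_4 (a b : ℝ) (F : ℝ → ℝ)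
    (h1 : ∀ x ∈ Set.Ioo a b,
      Filter.limsup (fun y => (F y : EReal)) (𝓝[Set.Ioo a x] x) ≤ (F x : EReal) ∧
      (F x : EReal) ≤ Filter.limsup (fun y => (F y : EReal)) (𝓝[Set.Ioo x b] x))
    (h2 : ∃ φ : ℝ → ℝ, ∃ α : ℝ, 0 < α ∧ StrictMonoOn φ (Set.Ioo a b) ∧
      ∃ S : Set ℝ, S.Countable ∧ ∀ x ∈ Set.Ioo a b \ S,
        (0 : EReal) ≤ Filter.liminf
          (fun h => (((F (x + h) - F x) / (φ (x + α * h) - φ x) : ℝ) : EReal))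
          (𝓝[Set.Ioi (0 : ℝ)] 0)) :
    MonotoneOn F (Set.Ioo a b) := by
  obtain ⟨φ, α, hα, hφ, S, hS, hd⟩ := h2
  intro x hx y hy hxy
  rcases eq_or_lt_of_le hxy with rfl | hxy'
  · exact le_rfl
  obtain ⟨s, hs⟩ := (hS.insert (a-1)).exists_eq_range (Set.insert_nonempty _ _)
  set ψ := psiAux s with hψdef
  have hax : a < x := hx.1
  have hyb : y < b := hy.2
  have key : ∀ ε : ℝ, 0 < ε → F x - F y ≤ ε * ((φ y - φ x) + 2 + (y - x)) := by
    intro ε hε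
    set A : Set ℝ := {z | z ∈ Set.Icc x y ∧
      F x - ε * ((φ z - φ x) + (ψ z - ψ x) + (z - x)) ≤ F z} with hAdef
    have hxA : x ∈ A := ⟨⟨le_rfl, hxy'.le⟩, by simp⟩
    have hAbdd : BddAbove A := ⟨y, fun z hz => hz.1.2⟩
    have hAne : A.Nonempty := ⟨x, hxA⟩
    set c := sSup A with hcdef
    have hxc : x ≤ c := le_csSup hAbdd hxA
    have hcy : c ≤ y := csSup_le hAne (fun z hz => hz.1.2)
    have hcab : c ∈ Set.Ioo a b := ⟨lt_of_lt_of_le hax hxc, lt_of_le_of_lt hcy hyb⟩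
    have Pc : F x - ε * ((φ c - φ x) + (ψ c - ψ x) + (c - x)) ≤ F c := by
      by_cases hcA : c ∈ A
      · exact hcA.2
      have hfreq : ∃ᶠ z in 𝓝[Set.Ioo a c] c,
          ((F x - ε * ((φ c - φ x) + (ψ c - ψ x) + (c - x)) : ℝ) : EReal) ≤ (F z : EReal) := by
        rw [Filter.frequently_iff]
        intro U hU
        rw [Metric.mem_nhdsWithin_iff] at hU
        obtain ⟨r, hr, hrU⟩ := hU
        obtain ⟨z, hzA, hzgt⟩ := exists_lt_of_lt_csSup hAne
          (show c - r < sSup A by rw [← hcdef]; linarith)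
        have hzc : z < c := lt_of_le_of_ne (le_csSup hAbdd hzA) (fun h => hcA (h ▸ hzA))
        have hxz : x ≤ z := hzA.1.1
        have hzy : z ≤ y := hzA.1.2
        refine ⟨z, hrU ⟨?_, lt_of_lt_of_le hax hxz, hzc⟩, ?_⟩
        · rw [Metric.mem_ball, Real.dist_eq, abs_lt]
          constructor <;> linarith
        · have hφzc : φ z ≤ φ c :=
            hφ.monotoneOn ⟨lt_of_lt_of_le hax hxz, lt_of_le_of_lt hzy hyb⟩ hcab hzc.le
          have hψzc : ψ z ≤ ψ c := psi_mono s hzc.le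
          have hD : (φ z - φ x) + (ψ z - ψ x) + (z - x)
              ≤ (φ c - φ x) + (ψ c - ψ x) + (c - x) := by linarith
          have hD2 := mul_le_mul_of_nonneg_left hD hε.le
          have := hzA.2
          exact_mod_cast (by linarith : F x - ε * ((φ c - φ x) + (ψ c - ψ x) + (c - x)) ≤ F z)
      have hle := le_limsup_of_frequently_le hfreq
      exact_mod_cast le_trans hle (h1 c hcab).1
    have hceq : c = y := by
      by_contra hne
      have hclty : c < y := lt_of_le_of_ne hcy hne
      by_cases hcS : c ∈ Set.range s
      · obtain ⟨n, hn⟩ := hcS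
        have hεn : (0:ℝ) < ε * (1/2)^n := by positivity
        have hlt : ((F c - ε * (1/2)^n : ℝ) : EReal)
            < Filter.limsup (fun y => (F y : EReal)) (𝓝[Set.Ioo c b] c) := by
          refine lt_of_lt_of_le ?_ (h1 c hcab).2
          exact_mod_cast (by linarith : F c - ε * (1/2)^n < F c)
        have hfreq := frequently_lt_of_lt_limsup (by isBoundedDefault) hlt
        rw [Filter.frequently_iff] at hfreq
        have hU : (Metric.ball c (y - c)) ∩ Set.Ioo c b ∈ 𝓝[Set.Ioo c b] c :=
          Filter.inter_mem (mem_nhdsWithin_of_mem_nhds (Metric.ball_mem_nhds _ (by linarith)))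
            self_mem_nhdsWithin
        obtain ⟨z, ⟨hzball, hcz, hzb⟩, hzF⟩ := hfreq hU
        have hzy : z < y := by
          rw [Metric.mem_ball, Real.dist_eq, abs_lt] at hzball
          linarith [hzball.2]
        have hFz : F c - ε * (1/2)^n < F z := by exact_mod_cast hzF
        have hψjump : ψ c + (1/2:ℝ)^n ≤ ψ z := by
          have := psi_jump s n (show s n < z by rw [hn]; exact hcz)
          rwa [hn] at this
        have hφcz : φ c ≤ φ z := hφ.monotoneOn hcab ⟨lt_trans hcab.1 hcz, hzb⟩ hcz.le
        have hD : ((φ c - φ x) + (ψ c - ψ x) + (c - x)) + (1/2:ℝ)^n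
            ≤ (φ z - φ x) + (ψ z - ψ x) + (z - x) := by linarith
        have hD2 := mul_le_mul_of_nonneg_left hD hε.le
        rw [mul_add] at hD2
        have hzA : z ∈ A := ⟨⟨le_trans hxc hcz.le, hzy.le⟩, by linarith⟩
        exact absurd (le_csSup hAbdd hzA) (not_le.mpr hcz)
      · have hcS' : c ∉ S := fun hcS2 => hcS (hs ▸ Set.mem_insert_of_mem _ hcS2)
        have hdc := hd c ⟨hcab, hcS'⟩
        set K : ℝ := 2*α+1 with hKdef
        have hK0 : (0:ℝ) < K := by positivity
        have hεK : (0:ℝ) < ε / K := by positivity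
        have hev : ∀ᶠ h in 𝓝[Set.Ioi (0:ℝ)] 0,
            ((-(ε/K) : ℝ) : EReal) < (((F (c + h) - F c) / (φ (c + α * h) - φ c) : ℝ) : EReal) := by
          refine eventually_lt_of_lt_liminf (lt_of_lt_of_le ?_ hdc)
          exact_mod_cast (by linarith : (-(ε/K) : ℝ) < 0)
        rw [Filter.eventually_iff, Metric.mem_nhdsWithin_iff] at hev
        obtain ⟨δ₀, hδ₀, hsub⟩ := hev
        set T : ℝ := min (y - c) ((b - c)/2) with hTdef
        have hT0 : 0 < T := lt_min (by linarith) (by linarith [hcab.2])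
        have hTy : T ≤ y - c := min_le_left _ _
        have hTb : T ≤ (b - c)/2 := min_le_right _ _
        set δ : ℝ := min (T/α) (min T δ₀) with hδdef
        have hδ0 : 0 < δ := lt_min (by positivity) (lt_min hT0 hδ₀)
        have hδT : δ ≤ T := le_trans (min_le_right _ _) (min_le_left _ _)
        have hδα : α * δ ≤ T := by
          have h' : δ ≤ T/α := min_le_left _ _
          rw [le_div_iff₀ hα] at h'
          linarith
        have hδδ₀ : δ ≤ δ₀ := le_trans (min_le_right _ _) (min_le_right _ _)
        obtain ⟨h, hh0, hhδ, hhr⟩ := ratio_aux (fun t => φ (c + t) - φ c) α δ T hα hδ0 hδT hδα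
          (fun u v hu huv hvT => by
            have hu' : c + u ∈ Set.Ioo a b :=
              ⟨by linarith [hcab.1], by linarith [hcab.2]⟩
            have hv' : c + v ∈ Set.Ioo a b :=
              ⟨by linarith [hcab.1], by linarith [hcab.2]⟩
            have := hφ.monotoneOn hu' hv' (by linarith)
            linarith) (by simp)
        have hzy : c + h < y := by linarith
        have hαh : 0 < α * h := by positivity
        have hαhb : c + α * h < b := by nlinarith [hcab.2]
        have hφpos : 0 < φ (c + α * h) - φ c := by
          have := hφ hcab ⟨by linarith [hcab.1], hαhb⟩ (by linarith)
          linarith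
        have hmem := hsub ⟨by rw [Metric.mem_ball, Real.dist_eq, abs_lt]; constructor <;> linarith,
          (by exact hh0 : h ∈ Set.Ioi (0:ℝ))⟩
        have hmem' : -(ε/K) < (F (c + h) - F c) / (φ (c + α * h) - φ c) := by
          exact_mod_cast hmem
        have hFz : -(ε/K) * (φ (c + α * h) - φ c) < F (c + h) - F c :=
          (lt_div_iff₀ hφpos).mp hmem'
        have h6 : φ (c + α * h) - φ c ≤ K * ((φ (c + h) - φ c) + h) := hhr
        have h7 := mul_le_mul_of_nonneg_left h6 hεK.le
        have h8 : (ε/K) * (K * ((φ (c + h) - φ c) + h)) = ε * ((φ (c + h) - φ c) + h) := by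
          field_simp
        have hψcz : ψ c ≤ ψ (c + h) := psi_mono s (by linarith)
        have hD : ((φ c - φ x) + (ψ c - ψ x) + (c - x)) + ((φ (c + h) - φ c) + h)
            ≤ (φ (c + h) - φ x) + (ψ (c + h) - ψ x) + ((c + h) - x) := by linarith
        have hD2 := mul_le_mul_of_nonneg_left hD hε.le
        rw [mul_add] at hD2
        have hzA : c + h ∈ A := ⟨⟨by linarith, hzy.le⟩, by linarith [h8 ▸ h7]⟩
        exact absurd (le_csSup hAbdd hzA) (not_le.mpr (by linarith : c < c + h))
    rw [hceq] at Pc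
    have hψb : ψ y - ψ x ≤ 2 := by
      have h1' := psi_le_two s y
      have h2' := psi_nonneg s x
      linarith
    have hD := mul_le_mul_of_nonneg_left
      (show (φ y - φ x) + (ψ y - ψ x) + (y - x) ≤ (φ y - φ x) + 2 + (y - x) by linarith) hε.le
    linarith
  by_contra hFF
  push_neg at hFF
  have hC : 0 < (φ y - φ x) + 2 + (y - x) := by
    have := hφ hx hy hxy'
    linarith
  have hkey := key ((F x - F y)/(2*((φ y - φ x)+2+(y-x)))) (div_pos (by linarith) (by positivity))
  have heq : ((F x - F y)/(2*((φ y - φ x)+2+(y-x)))) * ((φ y - φ x)+2+(y-x))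
      = (F x - F y)/2 := by
    field_simp
  linarith [heq ▸ hkey]
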